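/- Let L be a Lie algebra over a field F such that Der(L) is simple and complete. Then L is perfect and L/C(L) is a simple complete Lie algebra; i.e., L is a covering algebra of a simple complete Lie algebra. -/

import Mathlib

section Helpers

variable {F g h : Type*} [Field F] [LieRing g] [LieAlgebra F g] [LieRing h] [LieAlgebra F h]

lemma stmt16.mem_center_iff {z : g} :
    z ∈ LieAlgebra.center F g ↔ ∀ x : g, ⁅x, z⁆ = 0 :=
  LieModule.mem_maxTrivSubmodule F g g z

lemma stmt16.eqv_map_zero (e : g ≃ₗ⁅F⁆ h) : e 0 = 0 := e.toLinearEquiv.map_zero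

lemma stmt16.simple_of_equiv (e : g ≃ₗ⁅F⁆ h) (hs : LieAlgebra.IsSimple F g) :
    LieAlgebra.IsSimple F h := by
  constructor
  · intro I
    rcases hs.eq_bot_or_eq_top (LieIdeal.comap e.toLieHom I) with hI | hI
    · left
      rw [eq_bot_iff] at hI ⊢
      intro x hx
      have hm : e.symm x ∈ LieIdeal.comap e.toLieHom I := by
        rw [LieIdeal.mem_comap]
        show e (e.symm x) ∈ I
        rwa [e.apply_symm_apply]
      have h0 := hI hm
      rw [LieSubmodule.mem_bot] at h0 ⊢
      have : e (e.symm x) = e 0 := by rw [h0]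
      rw [e.apply_symm_apply, stmt16.eqv_map_zero] at this
      exact this
    · right
      rw [eq_top_iff] at hI ⊢
      intro x _
      have hm : e.symm x ∈ LieIdeal.comap e.toLieHom I := hI trivial
      rw [LieIdeal.mem_comap] at hm
      have hm' : e (e.symm x) ∈ I := hm
      rwa [e.apply_symm_apply] at hm'
  · intro habel
    apply hs.non_abelian
    constructor
    intro x y
    have h1 : e ⁅x, y⁆ = 0 := by rw [e.map_lie, trivial_lie_zero]
    exact e.injective (h1.trans (stmt16.eqv_map_zero e).symm)

lemma stmt16.center_bot_of_equiv (e : g ≃ₗ⁅F⁆ h) (hc : LieAlgebra.center F g = ⊥) :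
    LieAlgebra.center F h = ⊥ := by
  rw [eq_bot_iff]
  intro z hz
  rw [stmt16.mem_center_iff] at hz
  have hmem : e.symm z ∈ LieAlgebra.center F g := by
    rw [stmt16.mem_center_iff]
    intro x
    apply e.injective
    rw [LieEquiv.coe_toLieHom, e.map_lie, stmt16.eqv_map_zero, e.apply_symm_apply, hz (e x)]
  rw [hc, LieSubmodule.mem_bot] at hmem
  rw [LieSubmodule.mem_bot]
  have : e (e.symm z) = e 0 := by rw [hmem]
  rwa [e.apply_symm_apply, stmt16.eqv_map_zero] at this

lemma stmt16.adSurj_of_equiv (e : g ≃ₗ⁅F⁆ h)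
    (hs : Function.Surjective (LieDerivation.ad F g)) :
    Function.Surjective (LieDerivation.ad F h) := by
  intro D
  let D' : LieDerivation F g g :=
    { toLinearMap := e.symm.toLinearEquiv.toLinearMap ∘ₗ D.toLinearMap ∘ₗ e.toLinearEquiv.toLinearMap
      leibniz' := by
        intro a b
        show e.symm (D (e ⁅a, b⁆)) = ⁅a, e.symm (D (e b))⁆ - ⁅b, e.symm (D (e a))⁆
        rw [e.map_lie, D.apply_lie_eq_sub]
        apply e.injective
        have hsub : e (⁅a, e.symm (D (e b))⁆ - ⁅b, e.symm (D (e a))⁆)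
            = e ⁅a, e.symm (D (e b))⁆ - e ⁅b, e.symm (D (e a))⁆ :=
          e.toLinearEquiv.map_sub _ _
        rw [LieEquiv.coe_toLieHom, e.apply_symm_apply, hsub, e.map_lie, e.map_lie,
          e.apply_symm_apply, e.apply_symm_apply] }
  obtain ⟨w, hw⟩ := hs D'
  refine ⟨e w, ?_⟩
  ext x
  have h1 : D' (e.symm x) = ⁅w, e.symm x⁆ := by
    rw [← hw, LieDerivation.ad_apply_apply]
  have h2 : D' (e.symm x) = e.symm (D x) := by
    show e.symm (D (e (e.symm x))) = e.symm (D x)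
    rw [e.apply_symm_apply]
  rw [LieDerivation.ad_apply_apply]
  have h3 : e (e.symm (D x)) = e ⁅w, e.symm x⁆ := by rw [← h1, h2]
  rw [e.apply_symm_apply, e.map_lie, e.apply_symm_apply] at h3
  exact h3.symm

end Helpers

/-- Let `L` be a Lie algebra over a field `F` such that `Der(L)` is simple and complete.
Then `L` is perfect and `L/C(L)` is a simple complete Lie algebra; i.e., `L` is a covering
algebra of a simple complete Lie algebra. -/
theorem stmt16 (F L : Type*) [Field F] [LieRing L] [LieAlgebra F L]
    (hsimple : LieAlgebra.IsSimple F (LieDerivation F L L))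
    -- `Der(L)` is complete: trivial center and every derivation is inner
    (hcenter : LieAlgebra.center F (LieDerivation F L L) = ⊥)
    (hinner : Function.Surjective (LieDerivation.ad F (LieDerivation F L L))) :
    ⁅(⊤ : LieIdeal F L), (⊤ : LieIdeal F L)⁆ = ⊤ ∧
      LieAlgebra.IsSimple F (L ⧸ LieAlgebra.center F L) ∧
      LieAlgebra.center F (L ⧸ LieAlgebra.center F L) = ⊥ ∧
      Function.Surjective (LieDerivation.ad F (L ⧸ LieAlgebra.center F L)) := by
  -- Step 1: `ad : L → Der L` is surjective.
  have hadsurj : Function.Surjective (LieDerivation.ad F L) := by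
    rcases hsimple.eq_bot_or_eq_top (LieDerivation.ad F L).idealRange with hbot | htop
    · exfalso
      -- every `ad x` is zero, so `L` is abelian
      have habel : ∀ x y : L, ⁅x, y⁆ = 0 := by
        intro x y
        have hx : LieDerivation.ad F L x ∈ (LieDerivation.ad F L).idealRange :=
          (LieDerivation.ad F L).mem_idealRange x
        rw [hbot, LieSubmodule.mem_bot] at hx
        have := congrArg (fun D : LieDerivation F L L => D y) hx
        simpa using this
      -- then the identity is a central derivation, which is zero
      let idD : LieDerivation F L L :=
        { toLinearMap := LinearMap.id
          leibniz' := by intro a b; simp [habel] }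
      have hidD : idD ∈ LieAlgebra.center F (LieDerivation F L L) := by
        rw [stmt16.mem_center_iff]
        intro E
        ext x
        simp [LieDerivation.commutator_apply, idD]
      rw [hcenter, LieSubmodule.mem_bot] at hidD
      have hLzero : ∀ x : L, x = 0 := by
        intro x
        have := congrArg (fun D : LieDerivation F L L => D x) hidD
        simpa [idD] using this
      apply hsimple.non_abelian
      constructor
      intro D E
      ext x
      simp [hLzero x]
    · intro D
      have : D ∈ (LieDerivation.ad F L).idealRange := htop ▸ trivial
      rwa [LieDerivation.mem_ad_idealRange_iff] at this
  -- Step 2: the quotient by the center is isomorphic to `Der L`.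
  rw [← LieDerivation.ad_ker_eq_center F L]
  have e : (L ⧸ (LieDerivation.ad F L).ker) ≃ₗ⁅F⁆ LieDerivation F L L :=
    ((LieDerivation.ad F L).quotKerEquivRange.trans
      (LieEquiv.ofEq _ _ (by rw [(LieHom.range_eq_top _).mpr hadsurj]))).trans
      LieSubalgebra.topEquiv
  refine ⟨?_, stmt16.simple_of_equiv e.symm hsimple,
    stmt16.center_bot_of_equiv e.symm hcenter, stmt16.adSurj_of_equiv e.symm hinner⟩
  -- Step 3: `L` is perfect.
  set K : LieIdeal F L := ⁅(⊤ : LieIdeal F L), (⊤ : LieIdeal F L)⁆ with hK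
  -- the center is contained in `K`
  have hZK : LieAlgebra.center F L ≤ K := by
    intro z hz
    by_contra hzK
    have hz0 : z ≠ 0 := fun h => hzK (h ▸ K.zero_mem)
    obtain ⟨f, hfz, hfK⟩ :=
      Submodule.exists_dual_map_eq_bot_of_notMem (p := K.toSubmodule) (x := z) hzK inferInstance
    have hfK' : ∀ y ∈ K, f y = 0 := by
      intro y hy
      have : f y ∈ Submodule.map f K.toSubmodule := ⟨y, hy, rfl⟩
      rwa [hfK, Submodule.mem_bot] at this
    rw [stmt16.mem_center_iff] at hz
    let D : LieDerivation F L L :=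
      { toLinearMap :=
          { toFun := fun x => f x • z
            map_add' := by intro a b; simp [add_smul]
            map_smul' := by intro c a; simp [smul_smul] }
        leibniz' := by
          intro a b
          have h1 : f ⁅a, b⁆ = 0 := hfK' _ (LieSubmodule.lie_mem_lie trivial trivial)
          show f ⁅a, b⁆ • z = ⁅a, f b • z⁆ - ⁅b, f a • z⁆
          rw [h1, lie_smul, lie_smul, hz a, hz b]
          simp }
    obtain ⟨w, hw⟩ := hadsurj D
    have h1 : D z = 0 := by
      rw [← hw, LieDerivation.ad_apply_apply, hz w]
    have h2 : D z = f z • z := rfl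
    rw [h2] at h1
    exact hz0 (by simpa [smul_eq_zero, hfz] using h1)
  -- `Der L` is perfect
  have hDperf : ⁅(⊤ : LieIdeal F (LieDerivation F L L)), (⊤ : LieIdeal F (LieDerivation F L L))⁆ = ⊤ := by
    rcases hsimple.eq_bot_or_eq_top ⁅(⊤ : LieIdeal F (LieDerivation F L L)), ⊤⁆ with hb | ht
    · exfalso
      apply hsimple.non_abelian
      constructor
      intro D E
      have : ⁅D, E⁆ ∈ ⁅(⊤ : LieIdeal F (LieDerivation F L L)), ⊤⁆ :=
        LieSubmodule.lie_mem_lie trivial trivial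
      rwa [hb, LieSubmodule.mem_bot] at this
    · exact ht
  -- conclude `K = ⊤`
  rw [eq_top_iff]
  intro x _
  -- `ad x` lies in the span of brackets of inner derivations, hence in `ad '' K`
  have hxmem : LieDerivation.ad F L x ∈
      Submodule.map ((LieDerivation.ad F L) : L →ₗ[F] LieDerivation F L L) K.toSubmodule := by
    have h1 : LieDerivation.ad F L x ∈
        (⁅(⊤ : LieIdeal F (LieDerivation F L L)), (⊤ : LieIdeal F (LieDerivation F L L))⁆ :
          LieIdeal F (LieDerivation F L L)) := by
      rw [hDperf]; trivial
    rw [← LieSubmodule.mem_toSubmodule, LieSubmodule.lieIdeal_oper_eq_linear_span] at h1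
    refine Submodule.span_le.mpr ?_ h1
    rintro D ⟨⟨a, -⟩, ⟨b, -⟩, rfl⟩
    obtain ⟨a', ha'⟩ := hadsurj a
    obtain ⟨b', hb'⟩ := hadsurj b
    refine ⟨⁅a', b'⁆, LieSubmodule.lie_mem_lie trivial trivial, ?_⟩
    show LieDerivation.ad F L ⁅a', b'⁆ = ⁅(a : LieDerivation F L L), b⁆
    rw [LieHom.map_lie, ha', hb']
  obtain ⟨c, hcK, hc⟩ := hxmem
  have hxc : x - c ∈ LieAlgebra.center F L := by
    rw [← LieDerivation.ad_ker_eq_center F L, LieHom.mem_ker]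
    have hthis : LieDerivation.ad F L c = LieDerivation.ad F L x := hc
    have hsub : LieDerivation.ad F L (x - c)
        = LieDerivation.ad F L x - LieDerivation.ad F L c :=
      ((LieDerivation.ad F L) : L →ₗ[F] LieDerivation F L L).map_sub x c
    rw [hsub, hthis, sub_self]
  have := hZK hxc
  have : (x - c) + c ∈ K := K.add_mem this hcK
  simpa using this
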